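/- Let (Ω, 𝓕, P) be a probability space, m ⊆ 𝓕 a sub-σ-algebra, and Y₁, Y₂ square-integrable real random variables. Let Z : Ω → ℝᵏ be an m-measurable random vector with square-integrable coordinates, mean vector μ_N = E[Z], and covariance matrix Σ_f with entries (Σ_f)_{ij} = E[Z_i Z_j] − E[Z_i]E[Z_j]. Let Σ_N be an invertible k×k real matrix, let Σ₁, Σ₂ ∈ ℝᵏ be (row) vectors and μ₁, μ₂ ∈ ℝ, and assume the conditional means satisfy E[Y_i | m] = μ_i + Σ_i Σ_N⁻¹ (Z − μ_N) almost surely, for i = 1, 2, with E[Y_i | m] E[Y_j | m] and E[Y₁ Y₂ | m] integrable. Then Cov(Y₁, Y₂) = E[E[Y₁Y₂ | m] − E[Y₁ | m] E[Y₂ | m]] + Σ₁ Σ_N⁻¹ Σ_f (Σ₂ Σ_N⁻¹)ᵀ, where Cov(Y₁, Y₂) = E[Y₁Y₂] − E[Y₁]E[Y₂]. -/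

import Mathlib

open MeasureTheory Matrix Finset

private lemma l2_mul_integrable {Ω : Type*} {F : MeasurableSpace Ω} {P : Measure Ω}
    {f g : Ω → ℝ} (hf : MemLp f 2 P) (hg : MemLp g 2 P) :
    Integrable (fun ω => f ω * g ω) P := by
  have h : MemLp (g • f) 1 P :=
    hf.smul hg (hpqr := ⟨by rw [inv_one]; exact ENNReal.inv_two_add_inv_two⟩)
  have := memLp_one_iff_integrable.mp h
  exact (by simpa [Pi.smul_apply, smul_eq_mul, mul_comm] using this : Integrable (f * g) P)

/-- First identity of Proposition 4 (covariance function of the POGAMP, conditionally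
on the point pattern): the law-of-total-covariance decomposition
`Cov(Y₁,Y₂) = E[Cov(Y₁,Y₂|m)] + Σ₁ Σ_N⁻¹ Σ_f (Σ₂ Σ_N⁻¹)ᵀ`,
given the Gaussian conditional-mean formulas `E[Yᵢ|m] = μᵢ + Σᵢ Σ_N⁻¹ (Z − μ_N)`. -/
theorem pogamp_covariance_decomposition {Ω : Type*} {F : MeasurableSpace Ω}
    {P : Measure Ω} [IsProbabilityMeasure P]
    {m : MeasurableSpace Ω} (hm : m ≤ F) {k : ℕ}
    (Y₁ Y₂ : Ω → ℝ) (hY₁ : MemLp Y₁ 2 P) (hY₂ : MemLp Y₂ 2 P)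
    (Z : Ω → Fin k → ℝ) (hZm : Measurable[m] Z)
    (hZ2 : ∀ i, MemLp (fun ω => Z ω i) 2 P)
    (μN : Fin k → ℝ) (hμN : ∀ i, μN i = ∫ ω, Z ω i ∂P)
    (Sf : Matrix (Fin k) (Fin k) ℝ)
    (hSf : ∀ i j, Sf i j =
      ∫ ω, Z ω i * Z ω j ∂P - (∫ ω, Z ω i ∂P) * ∫ ω, Z ω j ∂P)
    (SN : Matrix (Fin k) (Fin k) ℝ) (hSN : IsUnit SN.det)
    (S₁ S₂ : Fin k → ℝ) (μ₁ μ₂ : ℝ)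
    (hc₁ : P[Y₁|m] =ᵐ[P] fun ω => μ₁ + S₁ ⬝ᵥ (SN⁻¹ *ᵥ fun j => Z ω j - μN j))
    (hc₂ : P[Y₂|m] =ᵐ[P] fun ω => μ₂ + S₂ ⬝ᵥ (SN⁻¹ *ᵥ fun j => Z ω j - μN j))
    (hint1 : Integrable (fun ω => (P[Y₁|m]) ω * (P[Y₂|m]) ω) P)
    (hint2 : Integrable (P[fun ω => Y₁ ω * Y₂ ω|m]) P) :
    ∫ ω, Y₁ ω * Y₂ ω ∂P - (∫ ω, Y₁ ω ∂P) * ∫ ω, Y₂ ω ∂P =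
      (∫ ω, ((P[fun ω => Y₁ ω * Y₂ ω|m]) ω - (P[Y₁|m]) ω * (P[Y₂|m]) ω) ∂P)
        + (S₁ ᵥ* SN⁻¹) ⬝ᵥ (Sf *ᵥ (S₂ ᵥ* SN⁻¹)) := by
  set a : Fin k → ℝ := S₁ ᵥ* SN⁻¹ with ha
  set b : Fin k → ℝ := S₂ ᵥ* SN⁻¹ with hb
  set V : Fin k → Ω → ℝ := fun j ω => Z ω j - μN j with hV
  have hVmem : ∀ j, MemLp (V j) 2 P := fun j => (hZ2 j).sub (memLp_const (μN j))
  have hVint : ∀ j, Integrable (V j) P := fun j => (hVmem j).integrable one_le_two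
  have hVmean : ∀ j, ∫ ω, V j ω ∂P = 0 := by
    intro j
    have hZj := (hZ2 j).integrable one_le_two
    simp only [hV]
    rw [integral_sub hZj (integrable_const _)]
    simp [hμN j]
  have hVV : ∀ j l, ∫ ω, V j ω * V l ω ∂P = Sf j l := by
    intro j l
    have hjl : Integrable (fun ω => Z ω j * Z ω l) P :=
      l2_mul_integrable (hZ2 j) (hZ2 l)
    have hj := (hZ2 j).integrable one_le_two
    have hl := (hZ2 l).integrable one_le_two
    have heq : (fun ω => V j ω * V l ω) = fun ω =>
        Z ω j * Z ω l - μN j * (Z ω l) - μN l * (Z ω j) + μN j * μN l := by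
      funext ω; simp only [hV]; ring
    have i1 : Integrable (fun ω => Z ω j * Z ω l - μN j * Z ω l) P :=
      hjl.sub (hl.const_mul _)
    have i2 : Integrable (fun ω => Z ω j * Z ω l - μN j * Z ω l - μN l * Z ω j) P :=
      i1.sub (hj.const_mul _)
    rw [heq, integral_add i2 (integrable_const _), integral_sub i1 (hj.const_mul _),
      integral_sub hjl (hl.const_mul _), integral_const_mul, integral_const_mul,
      integral_const]
    simp only [measure_univ, probReal_univ, one_smul]
    rw [hSf j l, hμN j, hμN l]
    ring
  -- conditional means rewritten
  have hdot : ∀ (S : Fin k → ℝ) ω,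
      S ⬝ᵥ (SN⁻¹ *ᵥ fun j => Z ω j - μN j) = ∑ j, (S ᵥ* SN⁻¹) j * V j ω := by
    intro S ω
    rw [dotProduct_mulVec]
    rfl
  have hsumint : ∀ (c : Fin k → ℝ), Integrable (fun ω => ∑ j, c j * V j ω) P :=
    fun c => integrable_finset_sum _ fun j _ => (hVint j).const_mul (c j)
  have hsumzero : ∀ (c : Fin k → ℝ), ∫ ω, (∑ j, c j * V j ω) ∂P = 0 := by
    intro c
    rw [integral_finset_sum _ fun j _ => (hVint j).const_mul (c j)]
    simp [integral_const_mul, hVmean]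
  -- E[Y₁] = μ₁, E[Y₂] = μ₂
  have hmean : ∀ (Y : Ω → ℝ) (μ : ℝ) (c : Fin k → ℝ),
      (P[Y|m] =ᵐ[P] fun ω => μ + ∑ j, c j * V j ω) → ∫ ω, Y ω ∂P = μ := by
    intro Y μ c hc
    rw [← integral_condExp hm, integral_congr_ae hc,
      integral_add (integrable_const _) (hsumint c), hsumzero c]
    simp
  have hc₁' : P[Y₁|m] =ᵐ[P] fun ω => μ₁ + ∑ j, a j * V j ω := by
    refine hc₁.trans (Filter.Eventually.of_forall fun ω => ?_)
    show μ₁ + S₁ ⬝ᵥ (SN⁻¹ *ᵥ fun j => Z ω j - μN j) = μ₁ + ∑ j, a j * V j ω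
    rw [hdot S₁ ω]
  have hc₂' : P[Y₂|m] =ᵐ[P] fun ω => μ₂ + ∑ j, b j * V j ω := by
    refine hc₂.trans (Filter.Eventually.of_forall fun ω => ?_)
    show μ₂ + S₂ ⬝ᵥ (SN⁻¹ *ᵥ fun j => Z ω j - μN j) = μ₂ + ∑ j, b j * V j ω
    rw [hdot S₂ ω]
  have hEY₁ : ∫ ω, Y₁ ω ∂P = μ₁ := hmean Y₁ μ₁ a hc₁'
  have hEY₂ : ∫ ω, Y₂ ω ∂P = μ₂ := hmean Y₂ μ₂ b hc₂'
  -- E[c₁ c₂]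
  have hVVint : Integrable (fun ω => ∑ j, ∑ l, (a j * b l) * (V j ω * V l ω)) P :=
    integrable_finset_sum _ fun j _ => integrable_finset_sum _ fun l _ =>
      (l2_mul_integrable (hVmem j) (hVmem l)).const_mul _
  have huv : ∫ ω, (∑ j, a j * V j ω) * (∑ l, b l * V l ω) ∂P
      = ∑ j, ∑ l, a j * b l * Sf j l := by
    have heq : (fun ω => (∑ j, a j * V j ω) * (∑ l, b l * V l ω))
        = fun ω => ∑ j, ∑ l, (a j * b l) * (V j ω * V l ω) := by
      funext ω
      rw [Finset.sum_mul_sum]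
      exact Finset.sum_congr rfl fun j _ => Finset.sum_congr rfl fun l _ => by ring
    rw [heq, integral_finset_sum _ fun j _ => integrable_finset_sum _ fun l _ =>
      (l2_mul_integrable (hVmem j) (hVmem l)).const_mul _]
    refine Finset.sum_congr rfl fun j _ => ?_
    rw [integral_finset_sum _ fun l _ => (l2_mul_integrable (hVmem j) (hVmem l)).const_mul _]
    exact Finset.sum_congr rfl fun l _ => by rw [integral_const_mul, hVV j l]
  have hprod : ∫ ω, (P[Y₁|m]) ω * (P[Y₂|m]) ω ∂P
      = μ₁ * μ₂ + ∑ j, ∑ l, a j * b l * Sf j l := by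
    have hcc : (fun ω => (P[Y₁|m]) ω * (P[Y₂|m]) ω) =ᵐ[P]
        fun ω => (μ₁ + ∑ j, a j * V j ω) * (μ₂ + ∑ l, b l * V l ω) := by
      filter_upwards [hc₁', hc₂'] with ω h1 h2
      rw [h1, h2]
    rw [integral_congr_ae hcc]
    have heq : (fun ω => (μ₁ + ∑ j, a j * V j ω) * (μ₂ + ∑ l, b l * V l ω))
        = fun ω => μ₁ * μ₂ + (μ₁ * (∑ l, b l * V l ω)
            + (μ₂ * (∑ j, a j * V j ω)
              + (∑ j, a j * V j ω) * (∑ l, b l * V l ω))) := by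
      funext ω; ring
    have iuv : Integrable (fun ω => (∑ j, a j * V j ω) * (∑ l, b l * V l ω)) P := by
      have heq2 : (fun ω => (∑ j, a j * V j ω) * (∑ l, b l * V l ω))
          = fun ω => ∑ j, ∑ l, (a j * b l) * (V j ω * V l ω) := by
        funext ω
        rw [Finset.sum_mul_sum]
        exact Finset.sum_congr rfl fun j _ => Finset.sum_congr rfl fun l _ => by ring
      rw [heq2]; exact hVVint
    have i3 : Integrable (fun ω => μ₂ * (∑ j, a j * V j ω)
        + (∑ j, a j * V j ω) * (∑ l, b l * V l ω)) P :=
      ((hsumint a).const_mul μ₂).add iuv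
    have i2 : Integrable (fun ω => μ₁ * (∑ l, b l * V l ω)
        + (μ₂ * (∑ j, a j * V j ω) + (∑ j, a j * V j ω) * (∑ l, b l * V l ω))) P :=
      ((hsumint b).const_mul μ₁).add i3
    rw [heq, integral_add (integrable_const _) i2,
      integral_add ((hsumint b).const_mul μ₁) i3,
      integral_add ((hsumint a).const_mul μ₂) iuv, huv]
    simp [integral_const_mul, hsumzero]
  -- conclude
  have hYY : Integrable (fun ω => Y₁ ω * Y₂ ω) P := l2_mul_integrable hY₁ hY₂
  have hcond : ∫ ω, (P[fun ω => Y₁ ω * Y₂ ω|m]) ω ∂P = ∫ ω, Y₁ ω * Y₂ ω ∂P :=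
    integral_condExp hm
  rw [integral_sub hint2 hint1, hcond, hprod, hEY₁, hEY₂]
  have hfinal : a ⬝ᵥ (Sf *ᵥ b) = ∑ j, ∑ l, a j * b l * Sf j l := by
    simp only [dotProduct, Matrix.mulVec, Finset.mul_sum]
    exact Finset.sum_congr rfl fun j _ => Finset.sum_congr rfl fun l _ => by ring
  rw [hfinal]
  ring
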